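/- Let n ≥ 2 and μ ∈ ℝ, and let U := {x ∈ ℝⁿ : 1 + μ|x|² > 0} (so U is the open ball of radius 1/√(−μ) if μ < 0, and U = ℝⁿ if μ ≥ 0). Define F : U × (ℝⁿ∖{0}) → ℝ by F(x,y) := √( (1 + μ|x|²)|y|² − μ⟨x,y⟩² ) / (1 + μ|x|²)^{3/4}, where |·| and ⟨·,·⟩ are the Euclidean norm and inner product. Then (1 + μ|x|²)|y|² − μ⟨x,y⟩² > 0 for all x ∈ U and y ≠ 0, and F is dually flat on U: for every x ∈ U, y ∈ ℝⁿ∖{0} and every index l ∈ {1,…,n}, Σ_{k=1}^{n} y^k · ∂²(F²)/(∂x^k ∂y^l)(x,y) − 2 ∂(F²)/∂x^l(x,y) = 0. -/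

import Mathlib

/-- The Riemannian metric `F(x,y) = √((1 + μ|x|²)|y|² − μ⟨x,y⟩²) / (1 + μ|x|²)^{3/4}`
on `U = {x : 1 + μ|x|² > 0}`, where `|·|`, `⟨·,·⟩` are the Euclidean norm and
inner product on `ℝⁿ`. -/
noncomputable def F18 (n : ℕ) (μ : ℝ) (x y : Fin n → ℝ) : ℝ :=
  Real.sqrt ((1 + μ * ∑ i, x i ^ 2) * (∑ i, y i ^ 2) - μ * (∑ i, x i * y i) ^ 2) /
    (1 + μ * ∑ i, x i ^ 2) ^ ((3 : ℝ) / 4)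


lemma sum_upd {n : ℕ} (x : Fin n → ℝ) (k : Fin n) (t : ℝ) (f : Fin n → ℝ → ℝ) :
    ∑ i, f i (Function.update x k t i) = (∑ i, f i (x i)) + (f k t - f k (x k)) := by
  have h : ∀ i : Fin n, f i (Function.update x k t i)
      = f i (x i) + (if k = i then f k t - f k (x k) else 0) := by
    intro i
    rcases eq_or_ne i k with rfl | h
    · simp
    · simp [Function.update_of_ne h, (Ne.symm h)]
  rw [Finset.sum_congr rfl fun i _ => h i, Finset.sum_add_distrib,
    Finset.sum_ite_eq Finset.univ k]
  simp

lemma A_nonneg {n : ℕ} (μ : ℝ) (x y : Fin n → ℝ) (hx : 0 < 1 + μ * ∑ i, x i ^ 2) :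
    0 ≤ (1 + μ * ∑ i, x i ^ 2) * (∑ i, y i ^ 2) - μ * (∑ i, x i * y i) ^ 2 := by
  have hcs := Finset.sum_mul_sq_le_sq_mul_sq Finset.univ x y
  have hB : 0 ≤ ∑ i, y i ^ 2 := Finset.sum_nonneg fun i _ => sq_nonneg _
  have hS : 0 ≤ ∑ i, x i ^ 2 := Finset.sum_nonneg fun i _ => sq_nonneg _
  rcases le_or_gt 0 μ with h | h
  · nlinarith
  · nlinarith [sq_nonneg (∑ i, x i * y i)]

lemma A_pos {n : ℕ} (μ : ℝ) (x y : Fin n → ℝ) (hx : 0 < 1 + μ * ∑ i, x i ^ 2)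
    (hy : y ≠ 0) :
    0 < (1 + μ * ∑ i, x i ^ 2) * (∑ i, y i ^ 2) - μ * (∑ i, x i * y i) ^ 2 := by
  have hcs := Finset.sum_mul_sq_le_sq_mul_sq Finset.univ x y
  have hS : 0 ≤ ∑ i, x i ^ 2 := Finset.sum_nonneg fun i _ => sq_nonneg _
  obtain ⟨j, hj⟩ := Function.ne_iff.mp hy
  have hB : 0 < ∑ i, y i ^ 2 :=
    Finset.sum_pos' (fun i _ => sq_nonneg _) ⟨j, Finset.mem_univ j, by simpa using pow_pos (abs_pos.mpr hj) 2⟩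
  rcases le_or_gt 0 μ with h | h
  · nlinarith
  · nlinarith [sq_nonneg (∑ i, x i * y i)]

lemma Fsq {n : ℕ} (μ : ℝ) (x y : Fin n → ℝ) (hx : 0 < 1 + μ * ∑ i, x i ^ 2) :
    (F18 n μ x y) ^ 2 =
      ((1 + μ * ∑ i, x i ^ 2) * (∑ i, y i ^ 2) - μ * (∑ i, x i * y i) ^ 2) *
        (1 + μ * ∑ i, x i ^ 2) ^ (-(3 : ℝ) / 2) := by
  have hA := A_nonneg μ x y hx
  unfold F18
  rw [div_pow, Real.sq_sqrt hA, ← Real.rpow_natCast ((1 + μ * ∑ i, x i ^ 2) ^ ((3:ℝ)/4)) 2,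
    ← Real.rpow_mul hx.le, div_eq_mul_inv, ← Real.rpow_neg hx.le]
  norm_num

lemma key (μ s0 q0 q1 q2 : ℝ) (p : ℝ) (hp : 0 < 1 + μ * (s0 + p ^ 2)) :
    HasDerivAt (fun t : ℝ => (q0 + q1 * t + q2 * t ^ 2) * (1 + μ * (s0 + t ^ 2)) ^ (-(3:ℝ)/2))
      ((q1 + 2 * q2 * p) * (1 + μ * (s0 + p ^ 2)) ^ (-(3:ℝ)/2) +
        (q0 + q1 * p + q2 * p ^ 2) *
          ((μ * (2 * p)) * (-(3:ℝ)/2) * (1 + μ * (s0 + p ^ 2)) ^ (-(3:ℝ)/2 - 1))) p := by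
  have h1 : HasDerivAt (fun t : ℝ => q0 + q1 * t + q2 * t ^ 2) (q1 + 2 * q2 * p) p := by
    have := (((hasDerivAt_id p).const_mul q1).const_add q0).add ((hasDerivAt_pow 2 p).const_mul q2)
    refine this.congr_deriv ?_
    simp; ring
  have h2 : HasDerivAt (fun t : ℝ => 1 + μ * (s0 + t ^ 2)) (μ * (2 * p)) p := by
    have := (((hasDerivAt_pow 2 p).const_add s0).const_mul μ).const_add 1
    refine this.congr_deriv ?_
    simp
  have h3 := h2.rpow_const (p := -(3:ℝ)/2) (Or.inl (ne_of_gt hp))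
  exact h1.mul h3

lemma inner_deriv (n : ℕ) (μ : ℝ) (x y : Fin n → ℝ) (l : Fin n)
    (hx : 0 < 1 + μ * ∑ i, x i ^ 2) :
    deriv (fun r => (F18 n μ x (Function.update y l r)) ^ 2) (y l) =
      2 * ((1 + μ * ∑ i, x i ^ 2) * y l - μ * (∑ i, x i * y i) * x l) *
        (1 + μ * ∑ i, x i ^ 2) ^ (-(3:ℝ)/2) := by
  have hfun : (fun r => (F18 n μ x (Function.update y l r)) ^ 2) =
      fun r => ((1 + μ * ∑ i, x i ^ 2) * ((∑ i, y i ^ 2) + (r ^ 2 - y l ^ 2))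
        - μ * ((∑ i, x i * y i) + (x l * r - x l * y l)) ^ 2) *
        (1 + μ * ∑ i, x i ^ 2) ^ (-(3:ℝ)/2) := by
    funext r
    rw [Fsq μ x _ hx, sum_upd y l r (fun _ v => v ^ 2), sum_upd y l r (fun i v => x i * v)]
  rw [hfun]
  have ha : HasDerivAt (fun r : ℝ => (∑ i, y i ^ 2) + (r ^ 2 - y l ^ 2)) (2 * y l) (y l) := by
    simpa using ((hasDerivAt_pow 2 (y l)).sub_const ((y l) ^ 2)).const_add (∑ i, y i ^ 2)
  have hb : HasDerivAt (fun r : ℝ => (∑ i, x i * y i) + (x l * r - x l * y l)) (x l) (y l) := by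
    simpa using (((hasDerivAt_id (y l)).const_mul (x l)).sub_const (x l * y l)).const_add
      (∑ i, x i * y i)
  have h1 : HasDerivAt (fun r : ℝ => (1 + μ * ∑ i, x i ^ 2) * ((∑ i, y i ^ 2) + (r ^ 2 - y l ^ 2))
      - μ * ((∑ i, x i * y i) + (x l * r - x l * y l)) ^ 2)
      (2 * ((1 + μ * ∑ i, x i ^ 2) * y l - μ * (∑ i, x i * y i) * x l)) (y l) := by
    have := (ha.const_mul (1 + μ * ∑ i, x i ^ 2)).sub ((hb.pow 2).const_mul μ)
    refine this.congr_deriv ?_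
    simp; ring
  exact (h1.mul_const _).deriv

theorem stmt18 (n : ℕ) (hn : 2 ≤ n) (μ : ℝ) :
    -- positivity of the radicand on U for y ≠ 0
    (∀ x : Fin n → ℝ, 0 < 1 + μ * ∑ i, x i ^ 2 → ∀ y : Fin n → ℝ, y ≠ 0 →
      0 < (1 + μ * ∑ i, x i ^ 2) * (∑ i, y i ^ 2) - μ * (∑ i, x i * y i) ^ 2) ∧
    -- F is dually flat on U:
    -- Σ_k y^k · ∂²(F²)/(∂x^k ∂y^l) − 2 ∂(F²)/∂x^l = 0
    (∀ x : Fin n → ℝ, 0 < 1 + μ * ∑ i, x i ^ 2 → ∀ y : Fin n → ℝ, y ≠ 0 →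
      ∀ l : Fin n,
        (∑ k : Fin n, y k *
          deriv (fun t =>
            deriv (fun r => (F18 n μ (Function.update x k t) (Function.update y l r)) ^ 2)
              (y l)) (x k)) -
          2 * deriv (fun t => (F18 n μ (Function.update x l t) y) ^ 2) (x l) = 0) := by
  constructor
  · exact fun x hx y hy => A_pos μ x y hx hy
  intro x hx y hy l
  -- abbreviations
  set a := (1 + μ * ∑ i, x i ^ 2) ^ (-(3:ℝ)/2) with ha_def
  set b := (1 + μ * ∑ i, x i ^ 2) ^ (-(3:ℝ)/2 - 1) with hb_def
  have hab : a = b * (1 + μ * ∑ i, x i ^ 2) := by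
    rw [ha_def, hb_def, ← Real.rpow_add_one (ne_of_gt hx)]
    norm_num
  -- the second-derivative terms
  have hder : ∀ k : Fin n,
      deriv (fun t =>
        deriv (fun r => (F18 n μ (Function.update x k t) (Function.update y l r)) ^ 2)
          (y l)) (x k)
      = if l = k then
          (-2 * μ * ((∑ i, x i * y i) - x l * y l)) * a
            - 6 * μ * x l * ((1 + μ * ∑ i, x i ^ 2) * y l - μ * (∑ i, x i * y i) * x l) * b
        else
          (4 * μ * y l * x k - 2 * μ * x l * y k) * a
            - 6 * μ * x k * ((1 + μ * ∑ i, x i ^ 2) * y l - μ * (∑ i, x i * y i) * x l) * b := by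
    intro k
    have h0 : 0 < 1 + μ * ((∑ i, x i ^ 2 - x k ^ 2) + x k ^ 2) := by
      have e : 1 + μ * ((∑ i, x i ^ 2 - x k ^ 2) + x k ^ 2) = 1 + μ * ∑ i, x i ^ 2 := by ring
      rw [e]; exact hx
    have hcont : Continuous fun t : ℝ => 1 + μ * ((∑ i, x i ^ 2 - x k ^ 2) + t ^ 2) := by
      continuity
    have hop : ∀ᶠ t in nhds (x k), 0 < 1 + μ * ((∑ i, x i ^ 2 - x k ^ 2) + t ^ 2) :=
      hcont.continuousAt (Ioi_mem_nhds h0)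
    rcases eq_or_ne l k with h | h
    · subst h
      rw [if_pos rfl]
      have hev : (fun t => deriv
            (fun r => (F18 n μ (Function.update x l t) (Function.update y l r)) ^ 2) (y l))
          =ᶠ[nhds (x l)] (fun t =>
            ((2 * (1 + μ * (∑ i, x i ^ 2 - x l ^ 2)) * y l)
              + (-2 * μ * ((∑ i, x i * y i) - x l * y l)) * t + 0 * t ^ 2)
            * (1 + μ * ((∑ i, x i ^ 2 - x l ^ 2) + t ^ 2)) ^ (-(3:ℝ)/2)) := by
        filter_upwards [hop] with t ht
        have hxt : 0 < 1 + μ * ∑ i, Function.update x l t i ^ 2 := by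
          rw [sum_upd x l t (fun _ v => v ^ 2)]
          have e : 1 + μ * ((∑ i, x i ^ 2) + (t ^ 2 - x l ^ 2))
              = 1 + μ * ((∑ i, x i ^ 2 - x l ^ 2) + t ^ 2) := by ring
          rw [e]; exact ht
        rw [inner_deriv n μ (Function.update x l t) y l hxt,
          sum_upd x l t (fun _ v => v ^ 2), sum_upd x l t (fun i v => v * y i),
          Function.update_self,
          show (∑ i, x i ^ 2) + (t ^ 2 - x l ^ 2) = (∑ i, x i ^ 2 - x l ^ 2) + t ^ 2 by ring]
        ring
      rw [hev.deriv_eq, (key μ (∑ i, x i ^ 2 - x l ^ 2) _ _ _ (x l) h0).deriv,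
        show 1 + μ * (∑ i, x i ^ 2 - x l ^ 2 + x l ^ 2) = 1 + μ * ∑ i, x i ^ 2 by ring,
        ← ha_def, ← hb_def]
      ring
    · rw [if_neg h]
      have hev : (fun t => deriv
            (fun r => (F18 n μ (Function.update x k t) (Function.update y l r)) ^ 2) (y l))
          =ᶠ[nhds (x k)] (fun t =>
            ((2 * ((1 + μ * (∑ i, x i ^ 2 - x k ^ 2)) * y l
                - μ * ((∑ i, x i * y i) - x k * y k) * x l))
              + (-2 * μ * (y k * x l)) * t + (2 * μ * y l) * t ^ 2)
            * (1 + μ * ((∑ i, x i ^ 2 - x k ^ 2) + t ^ 2)) ^ (-(3:ℝ)/2)) := by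
        filter_upwards [hop] with t ht
        have hxt : 0 < 1 + μ * ∑ i, Function.update x k t i ^ 2 := by
          rw [sum_upd x k t (fun _ v => v ^ 2)]
          have e : 1 + μ * ((∑ i, x i ^ 2) + (t ^ 2 - x k ^ 2))
              = 1 + μ * ((∑ i, x i ^ 2 - x k ^ 2) + t ^ 2) := by ring
          rw [e]; exact ht
        rw [inner_deriv n μ (Function.update x k t) y l hxt,
          sum_upd x k t (fun _ v => v ^ 2), sum_upd x k t (fun i v => v * y i),
          Function.update_of_ne h,
          show (∑ i, x i ^ 2) + (t ^ 2 - x k ^ 2) = (∑ i, x i ^ 2 - x k ^ 2) + t ^ 2 by ring]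
        ring
      rw [hev.deriv_eq, (key μ (∑ i, x i ^ 2 - x k ^ 2) _ _ _ (x k) h0).deriv,
        show 1 + μ * (∑ i, x i ^ 2 - x k ^ 2 + x k ^ 2) = 1 + μ * ∑ i, x i ^ 2 by ring,
        ← ha_def, ← hb_def]
      ring
  -- the first-derivative term
  have h0l : 0 < 1 + μ * ((∑ i, x i ^ 2 - x l ^ 2) + x l ^ 2) := by
    have e : 1 + μ * ((∑ i, x i ^ 2 - x l ^ 2) + x l ^ 2) = 1 + μ * ∑ i, x i ^ 2 := by ring
    rw [e]; exact hx
  have hcontl : Continuous fun t : ℝ => 1 + μ * ((∑ i, x i ^ 2 - x l ^ 2) + t ^ 2) := by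
    continuity
  have hopl : ∀ᶠ t in nhds (x l), 0 < 1 + μ * ((∑ i, x i ^ 2 - x l ^ 2) + t ^ 2) :=
    hcontl.continuousAt (Ioi_mem_nhds h0l)
  have hel : deriv (fun t => (F18 n μ (Function.update x l t) y) ^ 2) (x l)
      = (2 * μ * (∑ i, y i ^ 2) * x l - 2 * μ * (∑ i, x i * y i) * y l) * a
        - 3 * μ * x l * ((1 + μ * ∑ i, x i ^ 2) * (∑ i, y i ^ 2)
            - μ * (∑ i, x i * y i) ^ 2) * b := by
    have hev : (fun t => (F18 n μ (Function.update x l t) y) ^ 2)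
        =ᶠ[nhds (x l)] (fun t =>
          (((1 + μ * (∑ i, x i ^ 2 - x l ^ 2)) * (∑ i, y i ^ 2)
              - μ * ((∑ i, x i * y i) - x l * y l) ^ 2)
            + (-2 * μ * ((∑ i, x i * y i) - x l * y l) * y l) * t
            + (μ * (∑ i, y i ^ 2) - μ * y l ^ 2) * t ^ 2)
          * (1 + μ * ((∑ i, x i ^ 2 - x l ^ 2) + t ^ 2)) ^ (-(3:ℝ)/2)) := by
      filter_upwards [hopl] with t ht
      have hxt : 0 < 1 + μ * ∑ i, Function.update x l t i ^ 2 := by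
        rw [sum_upd x l t (fun _ v => v ^ 2)]
        have e : 1 + μ * ((∑ i, x i ^ 2) + (t ^ 2 - x l ^ 2))
            = 1 + μ * ((∑ i, x i ^ 2 - x l ^ 2) + t ^ 2) := by ring
        rw [e]; exact ht
      rw [Fsq μ (Function.update x l t) y hxt,
        sum_upd x l t (fun _ v => v ^ 2), sum_upd x l t (fun i v => v * y i),
        show (∑ i, x i ^ 2) + (t ^ 2 - x l ^ 2) = (∑ i, x i ^ 2 - x l ^ 2) + t ^ 2 by ring]
      ring
    rw [hev.deriv_eq, (key μ (∑ i, x i ^ 2 - x l ^ 2) _ _ _ (x l) h0l).deriv,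
      show 1 + μ * (∑ i, x i ^ 2 - x l ^ 2 + x l ^ 2) = 1 + μ * ∑ i, x i ^ 2 by ring,
      ← ha_def, ← hb_def]
    ring
  rw [hel]
  rw [Finset.sum_congr rfl fun k _ => by rw [hder k]]
  rw [Finset.sum_congr rfl fun k (_ : k ∈ Finset.univ) => show
      y k * (if l = k then
          (-2 * μ * ((∑ i, x i * y i) - x l * y l)) * a
            - 6 * μ * x l * ((1 + μ * ∑ i, x i ^ 2) * y l - μ * (∑ i, x i * y i) * x l) * b
        else
          (4 * μ * y l * x k - 2 * μ * x l * y k) * a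
            - 6 * μ * x k * ((1 + μ * ∑ i, x i ^ 2) * y l - μ * (∑ i, x i * y i) * x l) * b)
      = (if l = k then
          y k * ((-2 * μ * ((∑ i, x i * y i) - x l * y l)) * a
            - 6 * μ * x l * ((1 + μ * ∑ i, x i ^ 2) * y l - μ * (∑ i, x i * y i) * x l) * b)
          - y k * ((4 * μ * y l * x k - 2 * μ * x l * y k) * a
            - 6 * μ * x k * ((1 + μ * ∑ i, x i ^ 2) * y l - μ * (∑ i, x i * y i) * x l) * b)
        else 0)
        + ((4 * μ * y l * a - 6 * μ * ((1 + μ * ∑ i, x i ^ 2) * y l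
              - μ * (∑ i, x i * y i) * x l) * b) * (x k * y k)
          + (-(2 * μ * x l * a)) * (y k ^ 2))
      from by split_ifs with hh <;> ring]
  rw [Finset.sum_add_distrib, Finset.sum_ite_eq Finset.univ l, Finset.sum_add_distrib,
    ← Finset.mul_sum, ← Finset.mul_sum]
  simp only [Finset.mem_univ, if_true]
  rw [hab]
  ring
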